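/- Let D be a digraph on a finite vertex set V, let w : V → ℕ be a weight function, and let X ⊆ V be nonempty. Let D' be the digraph obtained from D by contracting X into a new vertex v_X, i.e. the digraph on vertex set (V ∖ X) ∪ {v_X} in which, for u, u' ∈ V ∖ X, (u,u') is an arc of D' iff it is an arc of D, (u, v_X) is an arc of D' iff (u,x) is an arc of D for some x ∈ X, and (v_X, u) is an arc of D' iff (x,u) is an arc of D for some x ∈ X. Define w' on V(D') by w'(v_X) = ∑_{x∈X} w(x) and w'(u) = w(u) for u ∈ V ∖ X. Then R(D',w') ≥ R(D,w). Moreover, if the induced subdigraph D[X] is strongly connected (every vertex of X is reachable from every other vertex of X using only arcs with both endpoints in X), then R(D',w') = R(D,w). -/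

import Mathlib

open Finset

variable {V : Type*}

-- `kappa A u v = 1` if `v` is reachable from `u`, and `0` otherwise.
open Classical in
noncomputable def kappa (A : V → V → Prop) (u v : V) : ℕ :=
  if Relation.ReflTransGen A u v then 1 else 0

/-- `R(D, w) = 2 ∑_v C(w(v), 2) + ∑_{(u,v), u ≠ v} w(u) w(v) κ_D(u,v)`. -/
noncomputable def Rw [Fintype V] [DecidableEq V] (A : V → V → Prop) (w : V → ℕ) : ℕ :=
  2 * ∑ v, Nat.choose (w v) 2 +
    ∑ p ∈ Finset.univ.offDiag, w p.1 * w p.2 * kappa A p.1 p.2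

/-- The arc relation of the digraph obtained by contracting `X` into a new vertex
(the `Sum.inr` vertex). -/
def contractArcs (A : V → V → Prop) (X : Finset V) :
    ({v : V // v ∉ X} ⊕ Unit) → ({v : V // v ∉ X} ⊕ Unit) → Prop
  | Sum.inl u, Sum.inl u' => A u.1 u'.1
  | Sum.inl u, Sum.inr _ => ∃ x ∈ X, A u.1 x
  | Sum.inr _, Sum.inl u' => ∃ x ∈ X, A x u'.1
  | Sum.inr _, Sum.inr _ => False

/-- The contracted weight function: the new vertex gets the total weight of `X`. -/
def contractW (w : V → ℕ) (X : Finset V) : ({v : V // v ∉ X} ⊕ Unit) → ℕ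
  | Sum.inl u => w u.1
  | Sum.inr _ => ∑ x ∈ X, w x

-- auxiliary

def proj [DecidableEq V] (X : Finset V) (a : V) : {v : V // v ∉ X} ⊕ Unit :=
  if h : a ∈ X then Sum.inr () else Sum.inl ⟨a, h⟩

lemma two_choose (m : ℕ) : 2 * Nat.choose m 2 + m = m * m := by
  cases m with
  | zero => rfl
  | succ n =>
    rw [Nat.choose_two_right, Nat.two_mul_div_two_of_even (Nat.even_mul_pred_self _),
      Nat.succ_sub_one]
    ring

lemma step_up [DecidableEq V] {A : V → V → Prop} {X : Finset V} {a b : V} (h : A a b) :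
    Relation.ReflTransGen (contractArcs A X) (proj X a) (proj X b) := by
  unfold proj
  by_cases ha : a ∈ X <;> by_cases hb : b ∈ X
  · rw [dif_pos ha, dif_pos hb]
  · rw [dif_pos ha, dif_neg hb]
    exact Relation.ReflTransGen.single ⟨a, ha, h⟩
  · rw [dif_neg ha, dif_pos hb]
    exact Relation.ReflTransGen.single ⟨b, hb, h⟩
  · rw [dif_neg ha, dif_neg hb]
    exact Relation.ReflTransGen.single h

lemma rtg_up [DecidableEq V] {A : V → V → Prop} {X : Finset V} {a b : V}
    (h : Relation.ReflTransGen A a b) :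
    Relation.ReflTransGen (contractArcs A X) (proj X a) (proj X b) := by
  induction h with
  | refl => exact .refl
  | tail _ hstep ih => exact ih.trans (step_up hstep)

def isRep (X : Finset V) (a : V) : ({v : V // v ∉ X} ⊕ Unit) → Prop
  | Sum.inl u => a = u.1
  | Sum.inr _ => a ∈ X

lemma isRep_proj [DecidableEq V] (X : Finset V) (a : V) : isRep X a (proj X a) := by
  unfold proj
  split
  · exact ‹a ∈ X›
  · rfl

lemma rtg_down {A : V → V → Prop} {X : Finset V}
    (hSC : ∀ x ∈ X, ∀ y ∈ X, Relation.ReflTransGen (fun a b => a ∈ X ∧ b ∈ X ∧ A a b) x y)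
    {α β} (h : Relation.ReflTransGen (contractArcs A X) α β) :
    ∀ a b, isRep X a α → isRep X b β → Relation.ReflTransGen A a b := by
  have hmono : ∀ {x y : V}, Relation.ReflTransGen (fun a b => a ∈ X ∧ b ∈ X ∧ A a b) x y →
      Relation.ReflTransGen A x y := fun h => Relation.ReflTransGen.mono (r := fun a b => a ∈ X ∧ b ∈ X ∧ A a b) (p := A) (fun _ _ hc => hc.2.2) _ _ h
  induction h with
  | refl =>
    intro a b ha hb
    match α, ha, hb with
    | Sum.inl u, ha, hb => rw [show a = b from ha.trans hb.symm]
    | Sum.inr _, ha, hb => exact hmono (hSC a ha b hb)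
  | @tail γ β' h hstep ih =>
    intro a b ha hb
    match γ, β', hstep, hb with
    | Sum.inl u, Sum.inl u', hstep, hb =>
      rw [show b = u'.1 from hb]
      exact (ih a u.1 ha rfl).tail hstep
    | Sum.inl u, Sum.inr _, hstep, hb =>
      obtain ⟨x, hx, hax⟩ := hstep
      exact ((ih a u.1 ha rfl).tail hax).trans (hmono (hSC x hx b hb))
    | Sum.inr _, Sum.inl u', hstep, hb =>
      obtain ⟨x, hx, hxu⟩ := hstep
      rw [show b = u'.1 from hb]
      exact (ih a x ha hx).tail hxu
    | Sum.inr _, Sum.inr _, hstep, hb => exact absurd hstep (by exact id)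

lemma kappa_le [DecidableEq V] (A : V → V → Prop) (X : Finset V) (a b : V) :
    kappa A a b ≤ kappa (contractArcs A X) (proj X a) (proj X b) := by
  unfold kappa
  split
  · rw [if_pos (rtg_up ‹_›)]
  · exact Nat.zero_le _

lemma kappa_eq [DecidableEq V] {A : V → V → Prop} {X : Finset V}
    (hSC : ∀ x ∈ X, ∀ y ∈ X, Relation.ReflTransGen (fun a b => a ∈ X ∧ b ∈ X ∧ A a b) x y)
    (a b : V) :
    kappa (contractArcs A X) (proj X a) (proj X b) = kappa A a b := by
  unfold kappa
  by_cases h : Relation.ReflTransGen (contractArcs A X) (proj X a) (proj X b)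
  · rw [if_pos h, if_pos (rtg_down hSC h a b (isRep_proj X a) (isRep_proj X b))]
  · rw [if_neg h, if_neg (fun hr => h (rtg_up hr))]

lemma sum_fiber [Fintype V] [DecidableEq V] (w : V → ℕ) (X : Finset V)
    (F : ({v : V // v ∉ X} ⊕ Unit) → ℕ) :
    ∑ α, contractW w X α * F α = ∑ a, w a * F (proj X a) := by
  rw [Fintype.sum_sum_type, ← Finset.sum_add_sum_compl X]
  have h1 : ∑ a ∈ X, w a * F (proj X a) = ∑ _u : Unit, contractW w X (Sum.inr _u) * F (Sum.inr _u) := by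
    rw [Finset.univ_unique, Finset.sum_singleton]
    have hcongr : ∀ a ∈ X, w a * F (proj X a) = w a * F (Sum.inr ()) := fun a ha => by
      rw [show proj X a = Sum.inr () from dif_pos ha]
    rw [Finset.sum_congr rfl hcongr, ← Finset.sum_mul]
    rfl
  have h2 : ∑ a ∈ Xᶜ, w a * F (proj X a) = ∑ u : {v : V // v ∉ X}, contractW w X (Sum.inl u) * F (Sum.inl u) := by
    rw [Finset.sum_subtype (p := fun v => v ∉ X) Xᶜ (by simp) (fun a => w a * F (proj X a))]
    exact Finset.sum_congr rfl (fun u _ => by rw [show proj X u.1 = Sum.inl u from dif_neg u.2]; rfl)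
  rw [h1, h2, add_comm]

lemma Rw_key [Fintype V] [DecidableEq V] (A : V → V → Prop) (w : V → ℕ) :
    Rw A w + ∑ v, w v = ∑ a, ∑ b, w a * w b * kappa A a b := by
  have h1 : ∑ a, ∑ b, w a * w b * kappa A a b
      = ∑ p ∈ Finset.univ ×ˢ Finset.univ, w p.1 * w p.2 * kappa A p.1 p.2 := by
    rw [Finset.sum_product]
  rw [h1, ← Finset.diag_union_offDiag (Finset.univ : Finset V),
    Finset.sum_union (Finset.disjoint_diag_offDiag _), Finset.sum_diag]
  have hk : ∀ v : V, kappa A v v = 1 := fun v => if_pos .refl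
  simp only [hk, mul_one]
  have h2 : 2 * ∑ v, Nat.choose (w v) 2 + ∑ v, w v = ∑ v : V, w v * w v := by
    rw [Finset.mul_sum, ← Finset.sum_add_distrib]
    exact Finset.sum_congr rfl (fun v _ => two_choose (w v))
  unfold Rw
  omega

theorem stmt0 {V : Type*} [Fintype V] [DecidableEq V]
    (A : V → V → Prop) (hA : ∀ v, ¬ A v v) (w : V → ℕ)
    (X : Finset V) (hX : X.Nonempty) :
    Rw A w ≤ Rw (contractArcs A X) (contractW w X) ∧
      ((∀ x ∈ X, ∀ y ∈ X,
          Relation.ReflTransGen (fun a b => a ∈ X ∧ b ∈ X ∧ A a b) x y) →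
        Rw (contractArcs A X) (contractW w X) = Rw A w) := by
  set C := contractArcs A X with hC
  set w' := contractW w X with hw'
  have key1 : Rw A w + ∑ v, w v = ∑ a, ∑ b, w a * w b * kappa A a b := Rw_key A w
  have regroup : ∑ α, ∑ β, w' α * w' β * kappa C α β
      = ∑ a, ∑ b, w a * w b * kappa C (proj X a) (proj X b) := by
    calc ∑ α, ∑ β, w' α * w' β * kappa C α β
        = ∑ α, w' α * ∑ β, w' β * kappa C α β := by
          simp only [Finset.mul_sum, mul_assoc]
      _ = ∑ α, w' α * ∑ b, w b * kappa C α (proj X b) := by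
          refine Finset.sum_congr rfl (fun α _ => ?_)
          rw [sum_fiber w X (fun β => kappa C α β)]
      _ = ∑ a, w a * ∑ b, w b * kappa C (proj X a) (proj X b) :=
          sum_fiber w X (fun α => ∑ b, w b * kappa C α (proj X b))
      _ = ∑ a, ∑ b, w a * w b * kappa C (proj X a) (proj X b) := by
          simp only [Finset.mul_sum, mul_assoc]
  have key2 : Rw C w' + ∑ v, w v = ∑ a, ∑ b, w a * w b * kappa C (proj X a) (proj X b) := by
    have h3 : ∑ α, w' α = ∑ v, w v := by
      have := sum_fiber w X (fun _ => 1)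
      simpa using this
    rw [← regroup, ← h3]
    exact Rw_key C w'
  constructor
  · have hle : ∑ a, ∑ b, w a * w b * kappa A a b
        ≤ ∑ a, ∑ b, w a * w b * kappa C (proj X a) (proj X b) := by
      refine Finset.sum_le_sum (fun a _ => Finset.sum_le_sum (fun b _ => ?_))
      exact Nat.mul_le_mul_left _ (kappa_le A X a b)
    omega
  · intro hSC
    have heq : ∑ a, ∑ b, w a * w b * kappa C (proj X a) (proj X b)
        = ∑ a, ∑ b, w a * w b * kappa A a b := by
      refine Finset.sum_congr rfl (fun a _ => Finset.sum_congr rfl (fun b _ => ?_))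
      rw [kappa_eq hSC a b]
    omega
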